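/- Let λ be a Young diagram with n boxes and maximal hook length s = s(λ), and let 1 ≤ ℓ ≤ λ_1 be an integer with ℓ ≥ n/s. Then the excited sum satisfies S(λ, [ℓ]) ≤ (4e²)^ℓ · s^ℓ. -/

import Mathlib

open scoped BigOperators

namespace ThickHookPaper

/-- The diagonal length `δ(λ)` of a Young diagram: the number of diagonal boxes `(i,i)` in `λ`. -/
def diagLen (l : YoungDiagram) : ℕ := (l.cells.filter (fun u => u.1 = u.2)).card

/-- The maximal hook length `s(λ) = λ₁ + λ₁' - 1` of a Young diagram. -/
def maxHook (l : YoungDiagram) : ℕ := l.rowLen 0 + l.colLen 0 - 1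

/-- The hook length of the box `u = (i, j)` in `λ`. -/
def hook (l : YoungDiagram) (u : ℕ × ℕ) : ℕ :=
  (l.rowLen u.1 - u.2) + (l.colLen u.2 - u.1) - 1

/-- The number of standard tableaux of the skew shape `λ \ μ`, defined as the number of
saturated chains of Young diagrams from `μ` to `λ` (each step adding exactly one box). -/
noncomputable def skewSYT (μ l : YoungDiagram) : ℕ :=
  Nat.card {f : Fin (l.card - μ.card + 1) → YoungDiagram //
    f 0 = μ ∧ f (Fin.last _) = l ∧
    ∀ i : Fin (l.card - μ.card),
      f i.castSucc ≤ f i.succ ∧ (f i.succ).card = (f i.castSucc).card + 1}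

/-- The number of standard Young tableaux of shape `λ`, i.e. the dimension `d_λ`. -/
noncomputable def dim (l : YoungDiagram) : ℕ := skewSYT ⊥ l

/-! ### Ribbons and the Murnaghan--Nakayama character -/

/-- Two boxes are adjacent if they share an edge. -/
def Adj (u v : ℕ × ℕ) : Prop :=
  (u.1 = v.1 ∧ (u.2 + 1 = v.2 ∨ v.2 + 1 = u.2)) ∨
    (u.2 = v.2 ∧ (u.1 + 1 = v.1 ∨ v.1 + 1 = u.1))

/-- A finite set of boxes is connected if any two of its boxes are linked by a path of
adjacent boxes inside the set. -/
def ConnectedCells (c : Finset (ℕ × ℕ)) : Prop :=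
  ∀ u ∈ c, ∀ v ∈ c, Relation.ReflTransGen (fun x y => x ∈ c ∧ y ∈ c ∧ Adj x y) u v

/-- A set of boxes contains no `2 × 2` square. -/
def No2x2 (c : Finset (ℕ × ℕ)) : Prop :=
  ∀ i j : ℕ, ¬ ((i, j) ∈ c ∧ (i + 1, j) ∈ c ∧ (i, j + 1) ∈ c ∧ (i + 1, j + 1) ∈ c)

/-- `IsRibbon μ l` : the skew diagram `l \ μ` is a ribbon (nonempty, connected, no 2×2 square). -/
def IsRibbon (μ l : YoungDiagram) : Prop :=
  μ ≤ l ∧ (l.cells \ μ.cells).Nonempty ∧ ConnectedCells (l.cells \ μ.cells) ∧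
    No2x2 (l.cells \ μ.cells)

/-- The height of a set of boxes: the difference between the largest and smallest
row indices occurring in it. -/
noncomputable def cellsHeight (c : Finset (ℕ × ℕ)) : ℕ :=
  c.sup Prod.fst - sInf (Prod.fst '' (c : Set (ℕ × ℕ)))

/-- `IsRibbonTableau l α f` : `f` is a ribbon tableau of shape `l` and weight `α`, i.e. a
chain `⊥ = f 0 ⊆ f 1 ⊆ ... ⊆ f N = l` where each successive skew diagram is a ribbon
with `α i` boxes. -/
def IsRibbonTableau (l : YoungDiagram) (α : List ℕ) (f : Fin (α.length + 1) → YoungDiagram) :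
    Prop :=
  f 0 = ⊥ ∧ f (Fin.last _) = l ∧
  ∀ i : Fin α.length,
    IsRibbon (f i.castSucc) (f i.succ) ∧
      ((f i.succ).cells \ (f i.castSucc).cells).card = α.get i

/-- The total height of a ribbon tableau: the sum of the heights of its ribbons. -/
noncomputable def tabHeight (N : ℕ) (f : Fin (N + 1) → YoungDiagram) : ℕ :=
  ∑ i : Fin N, cellsHeight ((f i.succ).cells \ (f i.castSucc).cells)

/-- The Murnaghan--Nakayama alternating sum over ribbon tableaux of shape `l` and weight `α`. -/
noncomputable def charMN (l : YoungDiagram) (α : List ℕ) : ℤ :=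
  ∑ᶠ f ∈ {f : Fin (α.length + 1) → YoungDiagram | IsRibbonTableau l α f},
    (-1 : ℤ) ^ tabHeight α.length f

/-- The cycle type of a permutation including fixed points (as parts equal to `1`). -/
def fullCycleType {n : ℕ} (σ : Equiv.Perm (Fin n)) : Multiset ℕ :=
  σ.cycleType + Multiset.replicate (n - σ.support.card) 1

/-- The character `ch^λ(σ)` of the irreducible representation of `S_n` indexed by `λ ⊢ n`,
defined via the Murnaghan--Nakayama rule. -/
noncomputable def charPerm (l : YoungDiagram) {n : ℕ} (σ : Equiv.Perm (Fin n)) : ℤ :=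
  charMN l (fullCycleType σ).toList

/-- The total number of cycles of `σ`, fixed points counted as 1-cycles. -/
def cyc {n : ℕ} (σ : Equiv.Perm (Fin n)) : ℕ := Multiset.card (fullCycleType σ)

/-- `|σ|`: the minimal number of transpositions whose product is `σ`, which equals
`n` minus the number of cycles of `σ` (fixed points included). -/
def transLen {n : ℕ} (σ : Equiv.Perm (Fin n)) : ℕ := n - cyc σ

/-! ### Excited diagrams -/

/-- The upper-right square of a box. -/
def URS (u : ℕ × ℕ) : Finset (ℕ × ℕ) :=
  {u, (u.1 + 1, u.2), (u.1, u.2 + 1), (u.1 + 1, u.2 + 1)}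

/-- One simple excitation step: an excitable box of `E` is moved diagonally up-right. -/
def ExciteStep (l : YoungDiagram) (E E' : Finset (ℕ × ℕ)) : Prop :=
  ∃ u ∈ E, URS u ⊆ l.cells ∧ E ∩ URS u = {u} ∧
    E' = insert (u.1 + 1, u.2 + 1) (E.erase u)

/-- The set `𝓔(λ, μ)` of excited diagrams of `μ` in `λ`. -/
def Excited (l μ : YoungDiagram) : Set (Finset (ℕ × ℕ)) :=
  {E | Relation.ReflTransGen (ExciteStep l) μ.cells E}

/-- The excited sum `S(λ, μ) = Σ_{E ∈ 𝓔(λ,μ)} Π_{u ∈ E} H(λ, u)`. -/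
noncomputable def excitedSum (l μ : YoungDiagram) : ℕ :=
  ∑ᶠ E ∈ Excited l μ, ∏ u ∈ E, hook l u

/-! ### Rectangles, rows -/

/-- The rectangular Young diagram `[a^b]` with `b` rows of length `a`. -/
def rect (a b : ℕ) : YoungDiagram :=
  ⟨Finset.range b ×ˢ Finset.range a, by
    rintro ⟨i, j⟩ ⟨i', j'⟩ ⟨h1, h2⟩ hu
    simp only [Finset.coe_product, Set.mem_prod, Finset.mem_coe, Finset.mem_range] at *
    exact ⟨lt_of_le_of_lt h1 hu.1, lt_of_le_of_lt h2 hu.2⟩⟩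

/-- The one-row Young diagram `[ℓ]`. -/
def rowDiagram (ℓ : ℕ) : YoungDiagram := rect ℓ 1

/-! ### Thick hook decompositions -/

/-- The boxes of `λ` whose diagonal index `min i j` lies in `[lo, hi)`: this is the thick hook
`λ^{(lo+1) → hi}` in the (1-indexed) notation of the paper. -/
def thickHookCells (l : YoungDiagram) (lo hi : ℕ) : Finset (ℕ × ℕ) :=
  l.cells.filter (fun u => lo ≤ min u.1 u.2 ∧ min u.1 u.2 < hi)

/-- An `(a, b)` thick hook decomposition of `λ`: diagonal indices
`0 = i_0 < i_1 < ... < i_p = δ(λ)` such that each thick hook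
`T_j = λ^{(i_{j-1}+1) → i_j}` has between `a` and `b` boxes. -/
structure ThickHookDecomp (l : YoungDiagram) (a b : ℝ) where
  p : ℕ
  p_pos : 0 < p
  idx : ℕ → ℕ
  idx_zero : idx 0 = 0
  idx_last : idx p = diagLen l
  idx_strictMono : ∀ j < p, idx j < idx (j + 1)
  size_lb : ∀ j < p, a ≤ ((thickHookCells l (idx j) (idx (j + 1))).card : ℝ)
  size_ub : ∀ j < p, ((thickHookCells l (idx j) (idx (j + 1))).card : ℝ) ≤ b

/-- The corners of a Young diagram: boxes `u ∈ λ` such that neither the box to the right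
nor the box above (in the French convention: the next box in the row and in the column)
belongs to `λ`. -/
def corners (l : YoungDiagram) : Finset (ℕ × ℕ) :=
  l.cells.filter (fun u => (u.1, u.2 + 1) ∉ l ∧ (u.1 + 1, u.2) ∉ l)



/-! ### Auxiliary material for the proof of Statement 8 -/

section Aux

lemma aux_downward_closed_eq_range (A : Finset ℕ) (h : ∀ a ∈ A, ∀ b ≤ a, b ∈ A) :
    A = Finset.range A.card := by
  have hsub : A ⊆ Finset.range A.card := by
    intro a ha
    have h1 : Finset.range (a + 1) ⊆ A := fun b hb =>
      h a ha b (Nat.lt_succ_iff.mp (Finset.mem_range.mp hb))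
    have := Finset.card_le_card h1
    simp only [Finset.card_range] at this
    exact Finset.mem_range.mpr this
  exact Finset.eq_of_subset_of_card_le hsub (by simp)

lemma aux_diag_mem_iff (l : YoungDiagram) (i : ℕ) : (i, i) ∈ l ↔ i < diagLen l := by
  classical
  set A : Finset ℕ := Finset.filter (fun i => (i, i) ∈ l) (Finset.range (l.colLen 0)) with hA
  have hmem : ∀ i, (i, i) ∈ l ↔ i ∈ A := by
    intro i
    simp only [hA, Finset.mem_filter, Finset.mem_range]
    constructor
    · intro h
      refine ⟨?_, h⟩
      have : (i, 0) ∈ l := l.up_left_mem le_rfl (Nat.zero_le _) h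
      exact YoungDiagram.mem_iff_lt_colLen.mp this
    · exact fun h => h.2
  have hdc : ∀ a ∈ A, ∀ b ≤ a, b ∈ A := by
    intro a ha b hb
    exact (hmem b).mp (l.up_left_mem hb hb ((hmem a).mpr ha))
  have hcard : diagLen l = A.card := by
    have : l.cells.filter (fun u => u.1 = u.2) = A.image (fun i => (i, i)) := by
      ext u
      obtain ⟨a, b⟩ := u
      simp only [Finset.mem_filter, Finset.mem_image, YoungDiagram.mem_cells]
      constructor
      · rintro ⟨h1, h2⟩
        subst h2
        exact ⟨_, (hmem _).mp h1, rfl⟩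
      · rintro ⟨i', hi', h⟩
        simp only [Prod.mk.injEq] at h
        obtain ⟨rfl, rfl⟩ := h
        exact ⟨(hmem i').mpr hi', rfl⟩
    rw [diagLen, this, Finset.card_image_of_injective _ (fun x y h => by simpa using h)]
  rw [hmem, aux_downward_closed_eq_range A hdc, Finset.mem_range, ← hcard]

/-- Finset of nondecreasing lists of length `n` with entries in `[d, D)`. -/
def Mset (D : ℕ) : ℕ → ℕ → Finset (List ℕ)
  | 0, _ => {[]}
  | n + 1, d => (Finset.Ico d D).biUnion fun a => ((Mset D n a).image fun L => a :: L)

lemma sum_Mset_succ (D n d : ℕ) (f : List ℕ → ℝ) :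
    ∑ L ∈ Mset D (n + 1) d, f L
      = ∑ a ∈ Finset.Ico d D, ∑ L ∈ Mset D n a, f (a :: L) := by
  rw [Mset, Finset.sum_biUnion]
  · refine Finset.sum_congr rfl fun a _ => ?_
    rw [Finset.sum_image]
    intro x _ y _ h
    exact (List.cons.injEq .. ▸ h).2
  · intro a _ b _ hab
    simp only [Function.onFun, Finset.disjoint_left]
    intro L hL hL'
    simp only [Finset.mem_image] at hL hL'
    obtain ⟨L1, _, rfl⟩ := hL
    obtain ⟨L2, _, h⟩ := hL'
    exact hab (List.cons.injEq .. ▸ h).1.symm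

lemma ofFn_mem_Mset (D : ℕ) : ∀ (n : ℕ) (k : Fin n → ℕ), Monotone k →
    (∀ j, k j < D) → ∀ d, (∀ j, d ≤ k j) → List.ofFn k ∈ Mset D n d := by
  intro n
  induction n with
  | zero => intro k _ _ d _; simp [Mset]
  | succ n ih =>
      intro k hk hkD d hkd
      rw [List.ofFn_succ, Mset]
      refine Finset.mem_biUnion.mpr ⟨k 0, Finset.mem_Ico.mpr ⟨hkd 0, hkD 0⟩, ?_⟩
      refine Finset.mem_image.mpr ⟨_, ih (fun i => k i.succ)
        (fun i j hij => hk (Fin.succ_le_succ_iff.mpr hij)) (fun j => hkD _) (k 0)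
        (fun j => hk (Fin.zero_le _)), rfl⟩

lemma Mset_prod_bound (D : ℕ) (x : ℕ → ℝ) (s : ℝ) (hs : 0 < s)
    (hx0 : ∀ k, 0 ≤ x k) (hxs : ∀ k, x k ≤ s) :
    ∀ (n : ℕ) (d : ℕ),
      ∑ L ∈ Mset D n d, (L.map x).prod
        ≤ (2 * s) ^ n * ∏ k ∈ Finset.Ico d D, (2 * s / (2 * s - x k)) := by
  have hpos : ∀ k, 0 < 2 * s - x k := fun k => by
    have := hxs k; nlinarith
  have hg1 : ∀ k, (1 : ℝ) ≤ 2 * s / (2 * s - x k) := fun k => by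
    rw [le_div_iff₀ (hpos k)]
    have := hx0 k; linarith
  set g : ℕ → ℝ := fun k => 2 * s / (2 * s - x k) with hgdef
  set G : ℕ → ℝ := fun a => ∏ k ∈ Finset.Ico a D, g k with hGdef
  have hG1 : ∀ a, (1 : ℝ) ≤ G a := by
    intro a
    simp only [hGdef]
    have := Finset.prod_le_prod (s := Finset.Ico a D) (f := fun _ => (1:ℝ)) (g := g)
      (fun k _ => by norm_num) (fun k _ => hg1 k)
    simpa using this
  intro n
  induction n with
  | zero =>
      intro d
      simp only [Mset, Finset.sum_singleton, List.map_nil, List.prod_nil, pow_zero, one_mul]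
      exact hG1 d
  | succ n ih =>
      intro d
      rw [sum_Mset_succ]
      have step : ∀ a ∈ Finset.Ico d D,
          ∑ L ∈ Mset D n a, ((a :: L).map x).prod ≤ (2 * s) ^ n * (x a * G a) := by
        intro a _
        simp only [List.map_cons, List.prod_cons]
        rw [← Finset.mul_sum]
        calc x a * ∑ L ∈ Mset D n a, (L.map x).prod
            ≤ x a * ((2 * s) ^ n * G a) := by
              exact mul_le_mul_of_nonneg_left (ih a) (hx0 a)
          _ = (2 * s) ^ n * (x a * G a) := by ring
      calc ∑ a ∈ Finset.Ico d D, ∑ L ∈ Mset D n a, ((a :: L).map x).prod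
          ≤ ∑ a ∈ Finset.Ico d D, (2 * s) ^ n * (x a * G a) :=
            Finset.sum_le_sum step
        _ = (2 * s) ^ n * ∑ a ∈ Finset.Ico d D, x a * G a := by
            rw [Finset.mul_sum]
        _ ≤ (2 * s) ^ n * (2 * s * G d) := by
            refine mul_le_mul_of_nonneg_left ?_ (by positivity)
            have key : ∀ a ∈ Finset.Ico d D, x a * G a = 2 * s * (G a - G (a + 1)) := by
              intro a ha
              obtain ⟨_, haD⟩ := Finset.mem_Ico.mp ha
              have hGa : G a = g a * G (a + 1) := by
                rw [hGdef]
                exact Finset.prod_eq_prod_Ico_succ_bot haD g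
              have h0 : 2 * s - x a ≠ 0 := ne_of_gt (hpos a)
              have : x a * g a = 2 * s * (g a - 1) := by
                rw [hgdef]
                dsimp only
                field_simp
                ring
              calc x a * G a = (x a * g a) * G (a + 1) := by rw [hGa]; ring
                _ = 2 * s * (g a - 1) * G (a + 1) := by rw [this]
                _ = 2 * s * (G a - G (a + 1)) := by rw [hGa]; ring
            rw [Finset.sum_congr rfl key, ← Finset.mul_sum]
            refine mul_le_mul_of_nonneg_left ?_ (by positivity)
            have htel : ∑ a ∈ Finset.Ico d D, (G a - G (a + 1)) = G d - G (d + (D - d)) := by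
              rw [Finset.sum_Ico_eq_sum_range]
              exact Finset.sum_range_sub' (fun i => G (d + i)) (D - d)
            rw [htel]
            have := hG1 (d + (D - d))
            linarith
        _ = (2 * s) ^ (n + 1) * G d := by ring

/-- The property that `E` consists of the boxes of an excited row in positions `k`. -/
def GoodRow (l : YoungDiagram) (ℓ : ℕ) (E : Finset (ℕ × ℕ)) (k : Fin ℓ → ℕ) : Prop :=
  Monotone k ∧ (∀ j : Fin ℓ, (k j, (j : ℕ) + k j) ∈ l) ∧
    E = Finset.image (fun j : Fin ℓ => ((k j, (j : ℕ) + k j) : ℕ × ℕ)) Finset.univ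

lemma goodRow_injective {ℓ : ℕ} {k : Fin ℓ → ℕ} (hk : Monotone k) :
    Function.Injective (fun j : Fin ℓ => ((k j, (j : ℕ) + k j) : ℕ × ℕ)) := by
  intro j1 j2 h
  simp only [Prod.mk.injEq] at h
  by_contra hne
  rcases Ne.lt_or_gt (fun hx : j1 = j2 => hne hx) with hlt | hlt
  · have := hk hlt.le
    have : (j1 : ℕ) + k j1 < (j2 : ℕ) + k j2 :=
      Nat.add_lt_add_of_lt_of_le (Fin.lt_iff_val_lt_val.mp hlt) this
    omega
  · have := hk hlt.le
    have : (j2 : ℕ) + k j2 < (j1 : ℕ) + k j1 :=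
      Nat.add_lt_add_of_lt_of_le (Fin.lt_iff_val_lt_val.mp hlt) this
    omega

lemma excited_good (l : YoungDiagram) (ℓ : ℕ) (h2 : ℓ ≤ l.rowLen 0) :
    ∀ E ∈ Excited l (rowDiagram ℓ), ∃ k : Fin ℓ → ℕ, GoodRow l ℓ E k := by
  intro E hE
  induction hE with
  | refl =>
      refine ⟨fun _ => 0, monotone_const, ?_, ?_⟩
      · intro j
        have : ((0 : ℕ), (j : ℕ)) ∈ l :=
          YoungDiagram.mem_iff_lt_rowLen.mpr (lt_of_lt_of_le j.isLt h2)
        simpa using this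
      · ext ⟨a, b⟩
        simp only [rowDiagram, rect, YoungDiagram.mem_cells, Finset.mem_product,
          Finset.mem_range, Finset.mem_image, Finset.mem_univ, true_and, Prod.mk.injEq]
        constructor
        · rintro ⟨ha, hb⟩
          interval_cases a
          exact ⟨⟨b, hb⟩, rfl, rfl⟩
        · rintro ⟨j, rfl, rfl⟩
          exact ⟨Nat.zero_lt_one, by simpa using j.isLt⟩
  | tail _ hstep ih =>
      obtain ⟨k, hmono, hmem, rfl⟩ := ih
      obtain ⟨u, hu, hURS, hcap, rfl⟩ := hstep
      set f : Fin ℓ → ℕ × ℕ := fun j => ((k j, (j : ℕ) + k j) : ℕ × ℕ) with hf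
      have hfinj : Function.Injective f := goodRow_injective hmono
      obtain ⟨j, -, hj⟩ := Finset.mem_image.mp hu
      have hgt : ∀ j'' : Fin ℓ, j < j'' → k j + 1 ≤ k j'' := by
        intro j'' hj''
        by_contra hcon
        have hle : k j'' ≤ k j := by omega
        have hj1lt : (j : ℕ) + 1 < ℓ := by
          have := j''.isLt
          have := Fin.lt_iff_val_lt_val.mp hj''
          omega
        set j1 : Fin ℓ := ⟨(j : ℕ) + 1, hj1lt⟩ with hj1
        have hkj1 : k j1 = k j := by
          have h1 : k j ≤ k j1 := hmono (by simp [Fin.le_iff_val_le_val, hj1])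
          have h2 : k j1 ≤ k j'' := hmono (by
            rw [Fin.le_iff_val_le_val]
            simp only [hj1]
            exact Fin.lt_iff_val_lt_val.mp hj'')
          omega
        have hfj1E : f j1 ∈ Finset.image f Finset.univ :=
          Finset.mem_image_of_mem f (Finset.mem_univ j1)
        have hval1 : f j1 = (u.1, u.2 + 1) := by
          rw [← hj]
          have hj1v : (j1 : ℕ) = (j : ℕ) + 1 := rfl
          simp only [hf, Prod.ext_iff, hkj1, hj1v]
          exact ⟨trivial, by omega⟩
        have hfj1URS : f j1 ∈ URS u := by
          rw [hval1]
          simp [URS]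
        have : f j1 ∈ Finset.image f Finset.univ ∩ URS u :=
          Finset.mem_inter.mpr ⟨hfj1E, hfj1URS⟩
        rw [hcap, Finset.mem_singleton, ← hj] at this
        have : j1 = j := hfinj this
        simp only [hj1, Fin.ext_iff] at this
        omega
      refine ⟨Function.update k j (k j + 1), ?_, ?_, ?_⟩
      · intro j1 j2 hle
        rcases eq_or_lt_of_le hle with rfl | hlt
        · exact le_rfl
        by_cases e1 : j1 = j
        · subst e1
          rw [Function.update_self, Function.update_of_ne (ne_of_gt hlt)]
          exact hgt j2 hlt
        · rw [Function.update_of_ne e1]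
          by_cases e2 : j2 = j
          · subst e2
            rw [Function.update_self]
            exact (hmono hle).trans (Nat.le_succ _)
          · rw [Function.update_of_ne e2]
            exact hmono hle
      · intro j''
        by_cases e : j'' = j
        · subst e
          rw [Function.update_self]
          have : ((u.1 + 1, u.2 + 1) : ℕ × ℕ) ∈ l.cells :=
            hURS (by simp [URS])
          rw [← hj] at this
          simpa [hf, add_assoc] using this
        · rw [Function.update_of_ne e]
          exact hmem j''
      · set k' := Function.update k j (k j + 1) with hk'
        set f' : Fin ℓ → ℕ × ℕ := fun j'' => ((k' j'', (j'' : ℕ) + k' j'') : ℕ × ℕ) with hf'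
        have hval : f' j = (u.1 + 1, u.2 + 1) := by
          simp only [hf', hk', Function.update_self, ← hj, hf]
          simp [Prod.ext_iff]
          omega
        have hagree : ∀ j'' ∈ Finset.univ.erase j, f j'' = f' j'' := by
          intro j'' hj''
          have : j'' ≠ j := Finset.ne_of_mem_erase hj''
          simp only [hf, hf', hk', Function.update_of_ne this]
        calc insert (u.1 + 1, u.2 + 1) ((Finset.image f Finset.univ).erase u)
            = insert (f' j) (Finset.image f (Finset.univ.erase j)) := by
              rw [hval, ← hj, Finset.image_erase hfinj]
          _ = insert (f' j) (Finset.image f' (Finset.univ.erase j)) := by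
              rw [Finset.image_congr fun a ha => hagree a ha]
          _ = Finset.image f' (insert j (Finset.univ.erase j)) := by
              rw [Finset.image_insert]
          _ = Finset.image f' Finset.univ := by
              rw [Finset.insert_erase (Finset.mem_univ j)]

lemma hook_anti_right (l : YoungDiagram) (i : ℕ) {j1 j2 : ℕ} (h : j1 ≤ j2) :
    hook l (i, j2) ≤ hook l (i, j1) := by
  unfold hook
  dsimp only
  have h1 : l.rowLen i - j2 ≤ l.rowLen i - j1 := Nat.sub_le_sub_left h _
  have h2 : l.colLen j2 - i ≤ l.colLen j1 - i :=
    Nat.sub_le_sub_right (l.colLen_anti j1 j2 h) i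
  omega

lemma hook_le_maxHook (l : YoungDiagram) (u : ℕ × ℕ) : hook l u ≤ maxHook l := by
  unfold hook maxHook
  have h1 : l.rowLen u.1 ≤ l.rowLen 0 := l.rowLen_anti 0 u.1 (Nat.zero_le _)
  have h2 : l.colLen u.2 ≤ l.colLen 0 := l.colLen_anti 0 u.2 (Nat.zero_le _)
  omega

lemma sum_diag_hooks_le (l : YoungDiagram) (D : ℕ) (hD : ∀ k < D, (k, k) ∈ l) :
    ∑ k ∈ Finset.range D, hook l (k, k) ≤ l.card := by
  classical
  set P : ℕ → Finset (ℕ × ℕ) := fun k =>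
    ((Finset.Ico k (l.rowLen k)).image fun j => ((k, j) : ℕ × ℕ)) ∪
      ((Finset.Ico (k + 1) (l.colLen k)).image fun i => ((i, k) : ℕ × ℕ)) with hP
  have hPsub : ∀ k, P k ⊆ l.cells := by
    intro k u hu
    simp only [hP, Finset.mem_union, Finset.mem_image, Finset.mem_Ico] at hu
    rcases hu with ⟨j, hj, rfl⟩ | ⟨i, hi, rfl⟩
    · exact (YoungDiagram.mem_cells (μ := l) _).mpr (YoungDiagram.mem_iff_lt_rowLen.mpr hj.2)
    · exact (YoungDiagram.mem_cells (μ := l) _).mpr (YoungDiagram.mem_iff_lt_colLen.mpr hi.2)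
  have hPmin : ∀ k, ∀ u ∈ P k, min u.1 u.2 = k := by
    intro k u hu
    simp only [hP, Finset.mem_union, Finset.mem_image, Finset.mem_Ico] at hu
    rcases hu with ⟨j, hj, rfl⟩ | ⟨i, hi, rfl⟩
    · simp [Nat.min_eq_left hj.1]
    · simp [Nat.min_eq_right (le_of_lt (by omega : k < i))]
  have hcard : ∀ k < D, hook l (k, k) ≤ (P k).card := by
    intro k hk
    have hkk := hD k hk
    have hrow : k < l.rowLen k := YoungDiagram.mem_iff_lt_rowLen.mp hkk
    have hcol : k < l.colLen k := YoungDiagram.mem_iff_lt_colLen.mp hkk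
    have hdisj : Disjoint ((Finset.Ico k (l.rowLen k)).image fun j => ((k, j) : ℕ × ℕ))
        ((Finset.Ico (k + 1) (l.colLen k)).image fun i => ((i, k) : ℕ × ℕ)) := by
      simp only [Finset.disjoint_left, Finset.mem_image, Finset.mem_Ico]
      rintro u ⟨j, hj, rfl⟩ ⟨i, hi, h⟩
      simp only [Prod.mk.injEq] at h
      omega
    have c1 : ((Finset.Ico k (l.rowLen k)).image fun j => ((k, j) : ℕ × ℕ)).card
        = l.rowLen k - k := by
      rw [Finset.card_image_of_injective _ (fun a b h => by simpa using h), Nat.card_Ico]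
    have c2 : ((Finset.Ico (k + 1) (l.colLen k)).image fun i => ((i, k) : ℕ × ℕ)).card
        = l.colLen k - (k + 1) := by
      rw [Finset.card_image_of_injective _ (fun a b h => by simpa using h), Nat.card_Ico]
    rw [hP]
    rw [Finset.card_union_of_disjoint hdisj, c1, c2]
    unfold hook
    dsimp only
    omega
  have hdisjP : ((Finset.range D : Finset ℕ) : Set ℕ).PairwiseDisjoint P := by
    intro a _ b _ hab
    simp only [Function.onFun, Finset.disjoint_left]
    intro u hua hub
    exact hab ((hPmin a u hua).symm.trans (hPmin b u hub))
  calc ∑ k ∈ Finset.range D, hook l (k, k)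
      ≤ ∑ k ∈ Finset.range D, (P k).card :=
        Finset.sum_le_sum fun k hk => hcard k (Finset.mem_range.mp hk)
    _ = ((Finset.range D).disjiUnion P hdisjP).card := (Finset.card_disjiUnion _ _ _).symm
    _ ≤ l.cells.card := Finset.card_le_card (by
        intro u hu
        rw [Finset.mem_disjiUnion] at hu
        obtain ⟨k, _, hk⟩ := hu
        exact hPsub k hk)
    _ = l.card := rfl

/-- A choice of excited-row structure for a set of boxes. -/
noncomputable def seqOf (l : YoungDiagram) (ℓ : ℕ) (E : Finset (ℕ × ℕ)) : Fin ℓ → ℕ :=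
  open Classical in
  if h : ∃ k : Fin ℓ → ℕ, GoodRow l ℓ E k then Classical.choose h else fun _ => 0

lemma seqOf_spec {l : YoungDiagram} {ℓ : ℕ} {E : Finset (ℕ × ℕ)}
    (h : ∃ k : Fin ℓ → ℕ, GoodRow l ℓ E k) : GoodRow l ℓ E (seqOf l ℓ E) := by
  rw [seqOf]
  rw [dif_pos h]
  exact Classical.choose_spec h

lemma list_map_prod_nonneg (x : ℕ → ℝ) (hx : ∀ k, 0 ≤ x k) (L : List ℕ) :
    0 ≤ (L.map x).prod := by
  induction L with
  | nil => simp
  | cons a L ih => simp only [List.map_cons, List.prod_cons]; exact mul_nonneg (hx a) ih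

end Aux

set_option maxHeartbeats 1600000 in
/-- bound on the excited sum of a long row. -/
theorem excited_sum_row_large (l : YoungDiagram) (ℓ : ℕ) (h1 : 1 ≤ ℓ) (h2 : ℓ ≤ l.rowLen 0)
    (h3 : (l.card : ℝ) / (maxHook l : ℝ) ≤ (ℓ : ℝ)) :
    (excitedSum l (rowDiagram ℓ) : ℝ) ≤
      (4 * Real.exp 1 ^ 2) ^ ℓ * (maxHook l : ℝ) ^ ℓ := by
  classical
  have hrow0 : 1 ≤ l.rowLen 0 := le_trans h1 h2
  have h00 : ((0 : ℕ), (0 : ℕ)) ∈ l := YoungDiagram.mem_iff_lt_rowLen.mpr hrow0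
  have hcol0 : 1 ≤ l.colLen 0 := YoungDiagram.mem_iff_lt_colLen.mp h00
  have hs1 : 1 ≤ maxHook l := by unfold maxHook; omega
  set s : ℝ := (maxHook l : ℝ) with hsdef
  have hs0 : (0 : ℝ) < s := by
    rw [hsdef]
    exact_mod_cast Nat.lt_of_lt_of_le Nat.zero_lt_one hs1
  set D := diagLen l with hD
  set x : ℕ → ℝ := fun k => ((hook l (k, k) : ℕ) : ℝ) with hx
  have hx0 : ∀ k, 0 ≤ x k := fun k => Nat.cast_nonneg _
  have hxs : ∀ k, x k ≤ s := fun k => by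
    rw [hx, hsdef]
    dsimp only
    exact_mod_cast hook_le_maxHook l (k, k)
  -- finiteness of the excited set
  have hGoodAll : ∀ E ∈ Excited l (rowDiagram ℓ), GoodRow l ℓ E (seqOf l ℓ E) :=
    fun E hE => seqOf_spec (excited_good l ℓ h2 E hE)
  have hfin : (Excited l (rowDiagram ℓ)).Finite := by
    refine Set.Finite.subset (l.cells.powerset : Finset (Finset (ℕ × ℕ))).finite_toSet ?_
    intro E hE
    obtain ⟨hmono, hmem, hEeq⟩ := hGoodAll E hE
    simp only [Finset.coe_powerset, Set.mem_preimage, Set.mem_powerset_iff, Finset.coe_subset,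
      Finset.mem_coe, Finset.mem_powerset]
    rw [hEeq]
    intro u hu
    obtain ⟨j, -, rfl⟩ := Finset.mem_image.mp hu
    exact (YoungDiagram.mem_cells (μ := l) _).mpr (hmem j)
  have hSum : excitedSum l (rowDiagram ℓ) = ∑ E ∈ hfin.toFinset, ∏ u ∈ E, hook l u := by
    rw [excitedSum]
    exact finsum_mem_eq_finite_toFinset_sum _ hfin
  -- pass to monotone sequences
  have hmain : ((excitedSum l (rowDiagram ℓ) : ℕ) : ℝ)
      ≤ ∑ L ∈ Mset D ℓ 0, (L.map x).prod := by
    rw [hSum]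
    push_cast
    set φ : Finset (ℕ × ℕ) → List ℕ := fun E => List.ofFn (seqOf l ℓ E) with hφ
    have hGoodF : ∀ E ∈ hfin.toFinset, GoodRow l ℓ E (seqOf l ℓ E) :=
      fun E hE => hGoodAll E (hfin.mem_toFinset.mp hE)
    have hpt : ∀ E ∈ hfin.toFinset, ∏ u ∈ E, ((hook l u : ℕ) : ℝ) ≤ ((φ E).map x).prod := by
      intro E hE
      obtain ⟨hmono, hmem, hEeq⟩ := hGoodF E hE
      set k := seqOf l ℓ E
      have hinj := goodRow_injective hmono
      have e1 : ∏ u ∈ E, ((hook l u : ℕ) : ℝ)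
          = ∏ j : Fin ℓ, ((hook l (k j, (j : ℕ) + k j) : ℕ) : ℝ) := by
        rw [hEeq, Finset.prod_image]
        intro a _ b _ h
        exact hinj h
      have e2 : ((φ E).map x).prod = ∏ j : Fin ℓ, x (k j) := by
        rw [hφ]
        dsimp only
        rw [List.map_ofFn, List.prod_ofFn]
        rfl
      rw [e1, e2]
      refine Finset.prod_le_prod (fun j _ => Nat.cast_nonneg _) (fun j _ => ?_)
      rw [hx]
      dsimp only
      exact_mod_cast hook_anti_right l (k j) (Nat.le_add_left (k j) (j : ℕ))
    have hinjOn : Set.InjOn φ hfin.toFinset := by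
      intro E1 hE1 E2 hE2 h
      have g1 := hGoodF E1 (by simpa using hE1)
      have g2 := hGoodF E2 (by simpa using hE2)
      have : seqOf l ℓ E1 = seqOf l ℓ E2 := List.ofFn_injective h
      rw [g1.2.2, g2.2.2, this]
    have hmaps : ∀ E ∈ hfin.toFinset, φ E ∈ Mset D ℓ 0 := by
      intro E hE
      obtain ⟨hmono, hmem, hEeq⟩ := hGoodF E hE
      refine ofFn_mem_Mset D ℓ _ hmono (fun j => ?_) 0 (fun j => Nat.zero_le _)
      have : (seqOf l ℓ E j, seqOf l ℓ E j) ∈ l :=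
        l.up_left_mem le_rfl (Nat.le_add_left _ _) (hmem j)
      rw [hD]
      exact (aux_diag_mem_iff l _).mp this
    calc ∑ E ∈ hfin.toFinset, ∏ u ∈ E, ((hook l u : ℕ) : ℝ)
        ≤ ∑ E ∈ hfin.toFinset, ((φ E).map x).prod := Finset.sum_le_sum hpt
      _ = ∑ L ∈ hfin.toFinset.image φ, (L.map x).prod := (Finset.sum_image
          (f := fun L => (L.map x).prod) (g := φ)
          (fun a ha b hb h => hinjOn (Finset.mem_coe.mpr ha) (Finset.mem_coe.mpr hb) h)).symm
      _ ≤ ∑ L ∈ Mset D ℓ 0, (L.map x).prod := by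
          refine Finset.sum_le_sum_of_subset_of_nonneg ?_
            (fun L _ _ => list_map_prod_nonneg x hx0 L)
          intro L hL
          obtain ⟨E, hE, rfl⟩ := Finset.mem_image.mp hL
          exact hmaps E hE
  -- the analytic bound
  have hbound := Mset_prod_bound D x s hs0 hx0 hxs ℓ 0
  -- each factor is at most exp (x k / s)
  have hfac : ∀ k, 2 * s / (2 * s - x k) ≤ Real.exp (x k / s) := by
    intro k
    have hyk0 := hx0 k
    have hyks := hxs k
    have hpos : 0 < 2 * s - x k := by nlinarith
    rw [div_le_iff₀ hpos]
    have hexp : x k / s + 1 ≤ Real.exp (x k / s) := Real.add_one_le_exp _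
    have ht0 : 0 ≤ x k / s := div_nonneg hyk0 (le_of_lt hs0)
    have ht1 : x k / s ≤ 1 := (div_le_one hs0).mpr hyks
    have hxk : x k = (x k / s) * s := by field_simp
    nlinarith [mul_nonneg (mul_nonneg ht0 (sub_nonneg.mpr ht1)) (le_of_lt hs0)]
  have hprodexp : ∏ k ∈ Finset.Ico 0 D, (2 * s / (2 * s - x k))
      ≤ Real.exp 1 ^ ℓ := by
    calc ∏ k ∈ Finset.Ico 0 D, (2 * s / (2 * s - x k))
        ≤ ∏ k ∈ Finset.Ico 0 D, Real.exp (x k / s) := by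
          refine Finset.prod_le_prod (fun k _ => ?_) (fun k _ => hfac k)
          have h1 := hxs k
          have h2 := hx0 k
          exact div_nonneg (by linarith) (by linarith)
      _ = Real.exp (∑ k ∈ Finset.Ico 0 D, x k / s) := (Real.exp_sum _ _).symm
      _ ≤ Real.exp ℓ := by
          refine Real.exp_le_exp.mpr ?_
          have hsumx : ∑ k ∈ Finset.Ico 0 D, x k ≤ (l.card : ℝ) := by
            have := sum_diag_hooks_le l D (fun k hk => (aux_diag_mem_iff l k).mpr (hD ▸ hk))
            have hcast : ((∑ k ∈ Finset.range D, hook l (k, k) : ℕ) : ℝ) ≤ (l.card : ℝ) :=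
              Nat.cast_le.mpr this
            rw [← Finset.range_eq_Ico]
            calc ∑ k ∈ Finset.range D, x k
                = ((∑ k ∈ Finset.range D, hook l (k, k) : ℕ) : ℝ) := by push_cast [hx]; rfl
              _ ≤ (l.card : ℝ) := hcast
          rw [← Finset.sum_div]
          rw [div_le_iff₀ hs0] at h3 ⊢
          calc ∑ k ∈ Finset.Ico 0 D, x k ≤ (l.card : ℝ) := hsumx
            _ ≤ (ℓ : ℝ) * s := h3
      _ = Real.exp 1 ^ ℓ := (Real.exp_one_pow ℓ).symm
  have he1 : (1 : ℝ) ≤ Real.exp 1 := by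
    have := Real.add_one_le_exp (1 : ℝ)
    linarith
  calc ((excitedSum l (rowDiagram ℓ) : ℕ) : ℝ)
      ≤ ∑ L ∈ Mset D ℓ 0, (L.map x).prod := hmain
    _ ≤ (2 * s) ^ ℓ * ∏ k ∈ Finset.Ico 0 D, (2 * s / (2 * s - x k)) := hbound
    _ ≤ (2 * s) ^ ℓ * Real.exp 1 ^ ℓ := by
        refine mul_le_mul_of_nonneg_left hprodexp (pow_nonneg (by linarith) ℓ)
    _ = (2 * Real.exp 1 * s) ^ ℓ := by rw [← mul_pow]; ring_nf
    _ ≤ (4 * Real.exp 1 ^ 2 * s) ^ ℓ := by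
        refine pow_le_pow_left₀ (by positivity) ?_ ℓ
        have h4 : 2 * Real.exp 1 ≤ 4 * Real.exp 1 ^ 2 := by nlinarith
        exact mul_le_mul_of_nonneg_right h4 hs0.le
    _ = (4 * Real.exp 1 ^ 2) ^ ℓ * s ^ ℓ := by rw [mul_pow]


end ThickHookPaper
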